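/- Let h, u, v : ℝ² → ℝ be C¹, and fix constants H > 0, U, V, g > 0, f_c. Define F = H(u,v) + h(U,V), G = U u + V v + g h, ω = ∂v/∂x − ∂u/∂y, and e = (1/2)H(u²+v²) + (1/2) g h². If ∂h/∂t + div F = 0 and ∂(u,v)/∂t + ω(−V, U) + f_c(−v, u) + ∇G = 0, then ∂e/∂t + div(g H h (u,v) + e (U,V)) = 0. -/

import Mathlib

/-- Partial derivative in time of a field `f t x y`. -/
noncomputable def pt (f : ℝ → ℝ → ℝ → ℝ) (t x y : ℝ) : ℝ :=
  deriv (fun s => f s x y) t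

/-- Partial derivative in `x` of a field `f t x y`. -/
noncomputable def px (f : ℝ → ℝ → ℝ → ℝ) (t x y : ℝ) : ℝ :=
  deriv (fun s => f t s y) x

/-- Partial derivative in `y` of a field `f t x y`. -/
noncomputable def py (f : ℝ → ℝ → ℝ → ℝ) (t x y : ℝ) : ℝ :=
  deriv (fun s => f t x s) y

lemma sliceT (f : ℝ → ℝ → ℝ → ℝ)
    (hf : ContDiff ℝ 1 (fun p : ℝ × ℝ × ℝ => f p.1 p.2.1 p.2.2)) (t x y : ℝ) :
    HasDerivAt (fun s => f s x y) (pt f t x y) t := by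
  have h1 : DifferentiableAt ℝ ((fun p : ℝ × ℝ × ℝ => f p.1 p.2.1 p.2.2) ∘
      (fun s : ℝ => (s, x, y))) t :=
    DifferentiableAt.comp t (hf.differentiable one_ne_zero (t, x, y))
      (DifferentiableAt.prodMk differentiableAt_id (differentiableAt_const _))
  exact (h1 : DifferentiableAt ℝ (fun s => f s x y) t).hasDerivAt

lemma sliceX (f : ℝ → ℝ → ℝ → ℝ)
    (hf : ContDiff ℝ 1 (fun p : ℝ × ℝ × ℝ => f p.1 p.2.1 p.2.2)) (t x y : ℝ) :
    HasDerivAt (fun s => f t s y) (px f t x y) x := by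
  have h1 : DifferentiableAt ℝ ((fun p : ℝ × ℝ × ℝ => f p.1 p.2.1 p.2.2) ∘
      (fun s : ℝ => (t, s, y))) x :=
    DifferentiableAt.comp x (hf.differentiable one_ne_zero (t, x, y))
      (DifferentiableAt.prodMk (differentiableAt_const _) (DifferentiableAt.prodMk differentiableAt_id (differentiableAt_const _)))
  exact (h1 : DifferentiableAt ℝ (fun s => f t s y) x).hasDerivAt

lemma sliceY (f : ℝ → ℝ → ℝ → ℝ)
    (hf : ContDiff ℝ 1 (fun p : ℝ × ℝ × ℝ => f p.1 p.2.1 p.2.2)) (t x y : ℝ) :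
    HasDerivAt (fun s => f t x s) (py f t x y) y := by
  have h1 : DifferentiableAt ℝ ((fun p : ℝ × ℝ × ℝ => f p.1 p.2.1 p.2.2) ∘
      (fun s : ℝ => (t, x, s))) y :=
    DifferentiableAt.comp y (hf.differentiable one_ne_zero (t, x, y))
      (DifferentiableAt.prodMk (differentiableAt_const _) (DifferentiableAt.prodMk (differentiableAt_const _) differentiableAt_id))
  exact (h1 : DifferentiableAt ℝ (fun s => f t x s) y).hasDerivAt

theorem linear_energy_continuity (g fc H U V : ℝ) (hg : 0 < g) (hH : 0 < H)
    (h u v : ℝ → ℝ → ℝ → ℝ)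
    (hC1h : ContDiff ℝ 1 (fun p : ℝ × ℝ × ℝ => h p.1 p.2.1 p.2.2))
    (hC1u : ContDiff ℝ 1 (fun p : ℝ × ℝ × ℝ => u p.1 p.2.1 p.2.2))
    (hC1v : ContDiff ℝ 1 (fun p : ℝ × ℝ × ℝ => v p.1 p.2.1 p.2.2))
    (F1 F2 G ω e : ℝ → ℝ → ℝ → ℝ)
    (hF1 : ∀ t x y, F1 t x y = H * u t x y + U * h t x y)
    (hF2 : ∀ t x y, F2 t x y = H * v t x y + V * h t x y)
    (hG : ∀ t x y, G t x y = U * u t x y + V * v t x y + g * h t x y)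
    (hω : ∀ t x y, ω t x y = px v t x y - py u t x y)
    (he : ∀ t x y,
      e t x y = (1 / 2) * H * (u t x y ^ 2 + v t x y ^ 2)
        + (1 / 2) * g * h t x y ^ 2)
    (mass : ∀ t x y, pt h t x y + px F1 t x y + py F2 t x y = 0)
    (momu : ∀ t x y, pt u t x y + ω t x y * (-V) + fc * (-(v t x y)) + px G t x y = 0)
    (momv : ∀ t x y, pt v t x y + ω t x y * U + fc * u t x y + py G t x y = 0) :
    ∀ t x y,
      pt e t x y
        + px (fun t x y => g * H * h t x y * u t x y + e t x y * U) t x y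
        + py (fun t x y => g * H * h t x y * v t x y + e t x y * V) t x y = 0 := by
  intro t x y
  have Ht_h := sliceT h hC1h t x y
  have Ht_u := sliceT u hC1u t x y
  have Ht_v := sliceT v hC1v t x y
  have Hx_h := sliceX h hC1h t x y
  have Hx_u := sliceX u hC1u t x y
  have Hx_v := sliceX v hC1v t x y
  have Hy_h := sliceY h hC1h t x y
  have Hy_u := sliceY u hC1u t x y
  have Hy_v := sliceY v hC1v t x y
  -- time derivative of energy
  have he_t : pt e t x y
      = H * u t x y * pt u t x y + H * v t x y * pt v t x y
        + g * h t x y * pt h t x y := by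
    have hfun : (fun s => e s x y)
        = fun s => (1 / 2) * H * (u s x y ^ 2 + v s x y ^ 2)
            + (1 / 2) * g * h s x y ^ 2 := funext fun s => he s x y
    have hd := (((Ht_u.pow 2).add (Ht_v.pow 2)).const_mul ((1 : ℝ) / 2 * H)).add
      ((Ht_h.pow 2).const_mul ((1 : ℝ) / 2 * g))
    show deriv (fun s => e s x y) t = _
    rw [hfun]; refine hd.deriv.trans ?_
    push_cast
    ring
  -- x derivative of F1
  have hF1x : px F1 t x y = H * px u t x y + U * px h t x y := by
    have hfun : (fun s => F1 t s y) = fun s => H * u t s y + U * h t s y :=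
      funext fun s => hF1 t s y
    show deriv (fun s => F1 t s y) x = _
    rw [hfun]; exact ((Hx_u.const_mul H).add (Hx_h.const_mul U)).deriv
  -- y derivative of F2
  have hF2y : py F2 t x y = H * py v t x y + V * py h t x y := by
    have hfun : (fun s => F2 t x s) = fun s => H * v t x s + V * h t x s :=
      funext fun s => hF2 t x s
    show deriv (fun s => F2 t x s) y = _
    rw [hfun]; exact ((Hy_v.const_mul H).add (Hy_h.const_mul V)).deriv
  -- x derivative of G
  have hGx : px G t x y = U * px u t x y + V * px v t x y + g * px h t x y := by
    have hfun : (fun s => G t s y)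
        = fun s => U * u t s y + V * v t s y + g * h t s y :=
      funext fun s => hG t s y
    show deriv (fun s => G t s y) x = _
    rw [hfun]; exact (((Hx_u.const_mul U).add (Hx_v.const_mul V)).add (Hx_h.const_mul g)).deriv
  -- y derivative of G
  have hGy : py G t x y = U * py u t x y + V * py v t x y + g * py h t x y := by
    have hfun : (fun s => G t x s)
        = fun s => U * u t x s + V * v t x s + g * h t x s :=
      funext fun s => hG t x s
    show deriv (fun s => G t x s) y = _
    rw [hfun]; exact (((Hy_u.const_mul U).add (Hy_v.const_mul V)).add (Hy_h.const_mul g)).deriv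
  -- x derivative of the x-flux
  have hfluxx : px (fun t x y => g * H * h t x y * u t x y + e t x y * U) t x y
      = g * H * px h t x y * u t x y + g * H * h t x y * px u t x y
        + (H * u t x y * px u t x y + H * v t x y * px v t x y
            + g * h t x y * px h t x y) * U := by
    have hfun : (fun s => g * H * h t s y * u t s y + e t s y * U)
        = fun s => (g * H) * h t s y * u t s y
            + ((1 / 2) * H * (u t s y ^ 2 + v t s y ^ 2)
                + (1 / 2) * g * h t s y ^ 2) * U := by
      funext s; rw [he]
    have hd := (((Hx_h.const_mul (g * H)).mul Hx_u)).add
      (((((Hx_u.pow 2).add (Hx_v.pow 2)).const_mul ((1 : ℝ) / 2 * H)).add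
        ((Hx_h.pow 2).const_mul ((1 : ℝ) / 2 * g))).mul_const U)
    show deriv (fun s => g * H * h t s y * u t s y + e t s y * U) x = _
    rw [hfun]; refine hd.deriv.trans ?_
    push_cast
    ring
  -- y derivative of the y-flux
  have hfluxy : py (fun t x y => g * H * h t x y * v t x y + e t x y * V) t x y
      = g * H * py h t x y * v t x y + g * H * h t x y * py v t x y
        + (H * u t x y * py u t x y + H * v t x y * py v t x y
            + g * h t x y * py h t x y) * V := by
    have hfun : (fun s => g * H * h t x s * v t x s + e t x s * V)
        = fun s => (g * H) * h t x s * v t x s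
            + ((1 / 2) * H * (u t x s ^ 2 + v t x s ^ 2)
                + (1 / 2) * g * h t x s ^ 2) * V := by
      funext s; rw [he]
    have hd := (((Hy_h.const_mul (g * H)).mul Hy_v)).add
      (((((Hy_u.pow 2).add (Hy_v.pow 2)).const_mul ((1 : ℝ) / 2 * H)).add
        ((Hy_h.pow 2).const_mul ((1 : ℝ) / 2 * g))).mul_const V)
    show deriv (fun s => g * H * h t x s * v t x s + e t x s * V) y = _
    rw [hfun]; refine hd.deriv.trans ?_
    push_cast
    ring
  have massE := mass t x y
  rw [hF1x, hF2y] at massE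
  have momuE := momu t x y
  rw [hω, hGx] at momuE
  have momvE := momv t x y
  rw [hω, hGy] at momvE
  rw [he_t, hfluxx, hfluxy]
  linear_combination (H * u t x y) * momuE + (H * v t x y) * momvE
    + (g * h t x y) * massE
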